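/- With notation as above, the sectional curvature κ^f of the warped metric g_f on a plane spanned by orthonormal (with respect to g_f) vectors X, Y both orthogonal to F satisfies κ^f(X,Y) = κ(X,Y) + 3(1−f²)‖A(X,Y)‖² + ((1−f²)/f²)‖S(X,Y)‖² − ((1−f²)/f²)⟨S(X,X),S(Y,Y)⟩. -/
import Mathlib


open scoped RealInnerProductSpace

/-- Abstract model of the smooth vector-field calculus of a foliated Riemannian
manifold `(M, 𝓕, g)`.  Here `C` plays the role of the algebra of smooth
functions on `M` and `V` that of the `C`-module of smooth vector fields.
`F` is the submodule of sections tangent to the foliation, `Fp` the submodule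
of sections orthogonal to it, `pt`/`pp` the corresponding projections,
`g` the Riemannian metric, `lie` the Lie bracket, `act` the action of a vector
field on a function (directional derivative) and `nabla` the Levi-Civita
connection of `g`. -/
structure FoliatedRiemann (C : Type*) (V : Type*) [CommRing C] [Algebra ℝ C]
    [AddCommGroup V] [Module C V] where
  g : V → V → C
  lie : V → V → V
  act : V → C → C
  nabla : V → V → V
  F : Submodule C V
  Fp : Submodule C V
  pt : V → V
  pp : V → V
  g_symm : ∀ v w, g v w = g w v
  g_addl : ∀ u v w, g (u + v) w = g u w + g v w
  g_smull : ∀ (c : C) (v w : V), g (c • v) w = c * g v w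
  g_nondeg : ∀ v, (∀ w, g v w = 0) → v = 0
  pt_mem : ∀ v, pt v ∈ F
  pp_mem : ∀ v, pp v ∈ Fp
  decomp : ∀ v, pt v + pp v = v
  pt_of_mem : ∀ v ∈ F, pt v = v
  pp_of_mem : ∀ v ∈ Fp, pp v = v
  orth : ∀ u x, u ∈ F → x ∈ Fp → g u x = 0
  full_orth : ∀ v, (∀ u ∈ F, g v u = 0) → v ∈ Fp
  torsion_free : ∀ v w, nabla v w - nabla w v = lie v w
  compat : ∀ e v w, act e (g v w) = g (nabla e v) w + g v (nabla e w)
  nabla_addl : ∀ u v w, nabla (u + v) w = nabla u w + nabla v w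
  nabla_smull : ∀ (c : C) (v w : V), nabla (c • v) w = c • nabla v w
  nabla_addr : ∀ u v w, nabla u (v + w) = nabla u v + nabla u w
  nabla_leibniz : ∀ (u : V) (c : C) (v : V), nabla u (c • v) = act u c • v + c • nabla u v
  act_add : ∀ (v : V) (a b : C), act v (a + b) = act v a + act v b
  act_mul : ∀ (v : V) (a b : C), act v (a * b) = act v a * b + a * act v b
  act_const : ∀ (v : V) (r : ℝ), act v (algebraMap ℝ C r) = 0

namespace FoliatedRiemann

variable {C V : Type*} [CommRing C] [Algebra ℝ C] [AddCommGroup V] [Module C V]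
variable (M : FoliatedRiemann C V)

/-- A basic function: constant along the leaves of the foliation. -/
def Basic (f : C) : Prop := ∀ u ∈ M.F, M.act u f = 0

/-- The warped metric `g_f`: equal to `f² g` on tangent components and to `g`
on orthogonal components. -/
def gf (f : C) (v w : V) : C := f ^ 2 * M.g (M.pt v) (M.pt w) + M.g (M.pp v) (M.pp w)

/-- The curvature tensor of a connection `n`. -/
def Rc (n : V → V → V) (x y z : V) : V := n x (n y z) - n y (n x z) - n (M.lie x y) z

/-- Lie derivative of a metric `h` in the direction `u`, evaluated on `x, y`. -/
def lieDer (h : V → V → C) (u x y : V) : C :=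
  M.act u (h x y) - h (M.lie u x) y - h x (M.lie u y)

/-- `n` is the Levi-Civita connection of the metric `h`: it is torsion free and
metric-compatible (which determines it uniquely, by the Koszul formula). -/
def IsLeviCivita (n : V → V → V) (h : V → V → C) : Prop :=
  (∀ v w, n v w - n w v = M.lie v w) ∧
  (∀ e v w, M.act e (h v w) = h (n e v) w + h v (n e w))

end FoliatedRiemann

namespace FoliatedRiemann

variable {C V : Type*} [CommRing C] [Algebra ℝ C] [AddCommGroup V] [Module C V]
variable (M : FoliatedRiemann C V)

lemma g_addr (u v w : V) : M.g u (v + w) = M.g u v + M.g u w := by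
  rw [M.g_symm, M.g_addl, M.g_symm v u, M.g_symm w u]

lemma g_smulr (c : C) (u v : V) : M.g u (c • v) = c * M.g u v := by
  rw [M.g_symm, M.g_smull, M.g_symm]

lemma g_zerol (v : V) : M.g 0 v = 0 := by
  have h := M.g_smull 0 v v
  simpa using h

lemma g_zeror (v : V) : M.g v 0 = 0 := by rw [M.g_symm]; exact M.g_zerol v

lemma g_negl (u v : V) : M.g (-u) v = - M.g u v := by
  have h := M.g_smull (-1) u v
  simpa using h

lemma g_negr (u v : V) : M.g u (-v) = - M.g u v := by
  rw [M.g_symm, g_negl, M.g_symm]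

lemma g_subl (u v w : V) : M.g (u - v) w = M.g u w - M.g v w := by
  rw [sub_eq_add_neg, M.g_addl, g_negl, sub_eq_add_neg]

lemma g_subr (u v w : V) : M.g u (v - w) = M.g u v - M.g u w := by
  rw [M.g_symm, g_subl, M.g_symm v u, M.g_symm w u]

lemma act_zero (v : V) : M.act v 0 = 0 := by
  have h := M.act_add v 0 0
  simp only [add_zero] at h
  exact left_eq_add.mp h

lemma inter_zero {w : V} (h1 : w ∈ M.F) (h2 : w ∈ M.Fp) : w = 0 := by
  apply M.g_nondeg
  intro z
  have h : M.g w z = M.g w (M.pt z) + M.g w (M.pp z) := by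
    rw [← g_addr, M.decomp]
  rw [h, M.g_symm w (M.pt z), M.orth _ _ (M.pt_mem z) h2,
    M.orth _ _ h1 (M.pp_mem z), add_zero]

lemma eqF_of_orthF {w : V} (hw : w ∈ M.F) (h : ∀ u ∈ M.F, M.g w u = 0) : w = 0 := by
  apply M.g_nondeg
  intro z
  have h2 : M.g w z = M.g w (M.pt z) + M.g w (M.pp z) := by rw [← g_addr, M.decomp]
  rw [h2, h _ (M.pt_mem z), M.orth _ _ hw (M.pp_mem z), add_zero]

lemma pt_pp_unique {a b v : V} (ha : a ∈ M.F) (hb : b ∈ M.Fp) (hv : a + b = v) :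
    M.pt v = a ∧ M.pp v = b := by
  have hd := M.decomp v
  have key : M.pt v - a = b - M.pp v := by
    have h : M.pt v + M.pp v = a + b := by rw [hd, hv]
    linear_combination (norm := abel) h
  have h1 : M.pt v - a ∈ M.F := M.F.sub_mem (M.pt_mem v) ha
  have h2 : M.pt v - a ∈ M.Fp := key ▸ M.Fp.sub_mem hb (M.pp_mem v)
  have h0 := M.inter_zero h1 h2
  have hpt : M.pt v = a := by linear_combination (norm := abel) h0
  refine ⟨hpt, ?_⟩
  have hd2 := M.decomp v
  rw [hpt] at hd2
  linear_combination (norm := abel) hd2 - hv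

lemma pt_of_Fp {v : V} (hv : v ∈ M.Fp) : M.pt v = 0 :=
  (M.pt_pp_unique M.F.zero_mem hv (zero_add v)).1

lemma pp_of_F {v : V} (hv : v ∈ M.F) : M.pp v = 0 :=
  (M.pt_pp_unique hv M.Fp.zero_mem (add_zero v)).2

lemma pt_add (v w : V) : M.pt (v + w) = M.pt v + M.pt w :=
  (M.pt_pp_unique (M.F.add_mem (M.pt_mem v) (M.pt_mem w))
    (M.Fp.add_mem (M.pp_mem v) (M.pp_mem w))
    (by rw [add_add_add_comm, M.decomp, M.decomp])).1

lemma pt_smul (c : C) (v : V) : M.pt (c • v) = c • M.pt v :=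
  (M.pt_pp_unique (M.F.smul_mem c (M.pt_mem v)) (M.Fp.smul_mem c (M.pp_mem v))
    (by rw [← smul_add, M.decomp])).1

lemma pt_sub (v w : V) : M.pt (v - w) = M.pt v - M.pt w :=
  (M.pt_pp_unique (M.F.sub_mem (M.pt_mem v) (M.pt_mem w))
    (M.Fp.sub_mem (M.pp_mem v) (M.pp_mem w))
    (by rw [sub_add_sub_comm, M.decomp, M.decomp])).1

lemma gf_eq (f : C) (v w : V) :
    M.gf f v w = M.g v w + (f ^ 2 - 1) * M.g (M.pt v) (M.pt w) := by
  have hg : M.g v w = M.g (M.pt v) (M.pt w) + M.g (M.pp v) (M.pp w) := by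
    conv_lhs => rw [← M.decomp v, ← M.decomp w]
    rw [M.g_addl, g_addr, g_addr,
      M.orth _ _ (M.pt_mem v) (M.pp_mem w), M.g_symm (M.pp v) (M.pt w),
      M.orth _ _ (M.pt_mem w) (M.pp_mem v)]
    ring
  rw [gf, hg]; ring

lemma gf_symm (f : C) (v w : V) : M.gf f v w = M.gf f w v := by
  rw [gf_eq, gf_eq, M.g_symm, M.g_symm (M.pt v)]

lemma gf_g_right (f : C) {z : V} (v : V) (hz : z ∈ M.Fp) : M.gf f v z = M.g v z := by
  rw [gf_eq, M.pt_of_Fp hz, g_zeror]; ring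

lemma gf_addl (f : C) (u v w : V) : M.gf f (u + v) w = M.gf f u w + M.gf f v w := by
  rw [gf_eq, gf_eq, gf_eq, M.g_addl, pt_add, M.g_addl]; ring

lemma gf_smull (f c : C) (v w : V) : M.gf f (c • v) w = c * M.gf f v w := by
  rw [gf_eq, gf_eq, M.g_smull, pt_smul, M.g_smull]; ring

lemma gf_subl (f : C) (u v w : V) : M.gf f (u - v) w = M.gf f u w - M.gf f v w := by
  rw [gf_eq, gf_eq, gf_eq, g_subl, pt_sub, g_subl]; ring

lemma gf_addr (f : C) (u v w : V) : M.gf f u (v + w) = M.gf f u v + M.gf f u w := by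
  rw [gf_symm, gf_addl, gf_symm M f v u, gf_symm M f w u]

lemma gf_smulr (f c : C) (v w : V) : M.gf f v (c • w) = c * M.gf f v w := by
  rw [gf_symm, gf_smull, gf_symm]

lemma gf_nondeg (f finv : C) (hfinv : f * finv = 1) (v : V)
    (h : ∀ z, M.gf f v z = 0) : v = 0 := by
  have h1 : f ^ 2 * finv ^ 2 = 1 := by
    have h2 : (f * finv) ^ 2 = 1 := by rw [hfinv]; ring
    linear_combination h2
  have hpp : M.pp v = 0 := by
    apply M.g_nondeg
    intro z
    have e1 : M.g (M.pp v) z = M.g (M.pp v) (M.pp z) := by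
      conv_lhs => rw [← M.decomp z]
      rw [g_addr, M.g_symm (M.pp v) (M.pt z),
        M.orth _ _ (M.pt_mem z) (M.pp_mem v), zero_add]
    have e2 : M.g v (M.pp z) = M.g (M.pp v) (M.pp z) := by
      conv_lhs => rw [← M.decomp v]
      rw [M.g_addl, M.orth _ _ (M.pt_mem v) (M.pp_mem z), zero_add]
    have hz := h (M.pp z)
    rw [gf_g_right M f v (M.pp_mem z), e2] at hz
    rw [e1, hz]
  have hpt : M.pt v = 0 := by
    apply M.g_nondeg
    intro z
    have e1 : M.g (M.pt v) z = M.g (M.pt v) (M.pt z) := by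
      conv_lhs => rw [← M.decomp z]
      rw [g_addr, M.orth _ _ (M.pt_mem v) (M.pp_mem z), add_zero]
    have e2 : M.g v (M.pt z) = M.g (M.pt v) (M.pt z) := by
      conv_lhs => rw [← M.decomp v]
      rw [M.g_addl, M.g_symm (M.pp v) (M.pt z),
        M.orth _ _ (M.pt_mem z) (M.pp_mem v), add_zero]
    have hz := h (M.pt z)
    rw [gf_eq, e2, M.pt_of_mem _ (M.pt_mem z)] at hz
    have hf2 : f ^ 2 * M.g (M.pt v) (M.pt z) = 0 := by linear_combination hz
    rw [e1]
    linear_combination finv ^ 2 * hf2 - M.g (M.pt v) (M.pt z) * h1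
  have hd := M.decomp v
  rw [hpt, hpp] at hd
  rw [← hd, add_zero]

lemma two_cancel (p q : C) (h : p + p = q + q) : p = q := by
  have h2 : (2 : ℝ) • p = (2 : ℝ) • q := by rw [two_smul, two_smul]; exact h
  have h3 := congrArg (fun c : C => (1/2 : ℝ) • c) h2
  simpa [smul_smul] using h3

lemma koszul (n : V → V → V) (h : V → V → C)
    (hTF : ∀ v w, n v w - n w v = M.lie v w)
    (hC : ∀ e v w, M.act e (h v w) = h (n e v) w + h v (n e w))
    (hsymm : ∀ v w, h v w = h w v)
    (hsubr : ∀ u v w, h u (v - w) = h u v - h u w)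
    (hsubl : ∀ u v w, h (u - v) w = h u w - h v w)
    (a b z : V) :
    h (n a b) z + h (n a b) z
      = M.act a (h b z) + M.act b (h z a) - M.act z (h a b)
        + h (M.lie a b) z - h (M.lie a z) b - h (M.lie b z) a := by
  have t1 : n b a = n a b - M.lie a b := by rw [← hTF a b]; abel
  have t2 : n z a = n a z - M.lie a z := by rw [← hTF a z]; abel
  have t3 : n z b = n b z - M.lie b z := by rw [← hTF b z]; abel
  rw [hC a b z, hC b z a, hC z a b, t1, t2, t3, hsubr, hsubr, hsubl]
  linear_combination hsymm (n a z) b + hsymm (n a b) z + hsymm z (M.lie a b)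
    + hsymm a (n b z) - hsymm a (M.lie b z)

end FoliatedRiemann

/-- sectional curvature of the warped metric on a plane spanned by
`g_f`-orthonormal vectors `X, Y` orthogonal to the foliation:
`κ^f(X,Y) = κ(X,Y) + 3(1−f²)‖A(X,Y)‖² + ((1−f²)/f²)‖S(X,Y)‖²
  − ((1−f²)/f²)⟨S(X,X),S(Y,Y)⟩`. -/
theorem warped_sectional_curvature_orthogonal
    {C V : Type*} [CommRing C] [PartialOrder C] [Algebra ℝ C]
    [AddCommGroup V] [Module C V]
    (M : FoliatedRiemann C V) (f finv : C) (hfpos : 0 < f) (hfinv : f * finv = 1)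
    (hbasic : M.Basic f)
    (nf A S : V → V → V)
    (hnf : M.IsLeviCivita nf (M.gf f))
    (hAval : ∀ x y, x ∈ M.Fp → y ∈ M.Fp → A x y ∈ M.F)
    (hAdef : ∀ x y, x ∈ M.Fp → y ∈ M.Fp → ∀ u ∈ M.F,
      M.g (A x y) u = (1/2 : ℝ) • (M.g (M.nabla x y) u - M.g (M.nabla y x) u))
    (hSval : ∀ x y, x ∈ M.Fp → y ∈ M.Fp → S x y ∈ M.F)
    (hSdef : ∀ x y, x ∈ M.Fp → y ∈ M.Fp → ∀ u ∈ M.F,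
      M.g (S x y) u = (1/2 : ℝ) • (M.g (M.nabla x y) u + M.g (M.nabla y x) u))
    (x y : V) (hx : x ∈ M.Fp) (hy : y ∈ M.Fp)
    (hxx : M.gf f x x = 1) (hyy : M.gf f y y = 1) (hxy : M.gf f x y = 0) :
    M.gf f (M.Rc nf x y y) x
      = M.g (M.Rc M.nabla x y y) x
        + (3 : C) * (1 - f ^ 2) * M.g (A x y) (A x y)
        + (1 - f ^ 2) * finv ^ 2 * M.g (S x y) (S x y)
        - (1 - f ^ 2) * finv ^ 2 * M.g (S x x) (S y y) := by
  obtain ⟨hTFf, hCf⟩ := hnf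
  have h1 : f ^ 2 * finv ^ 2 = 1 := by linear_combination (f * finv + 1) * hfinv
  have gf_subr : ∀ u v w : V, M.gf f u (v - w) = M.gf f u v - M.gf f u w := by
    intro u v w
    rw [M.gf_symm, M.gf_subl, M.gf_symm f v u, M.gf_symm f w u]
  have hSA : ∀ v w, v ∈ M.Fp → w ∈ M.Fp → ∀ u ∈ M.F,
      M.g (M.nabla v w) u = M.g (S v w) u + M.g (A v w) u := by
    intro v w hv hw u hu
    rw [hSdef v w hv hw u hu, hAdef v w hv hw u hu, ← smul_add]
    have h2 : (M.g (M.nabla v w) u + M.g (M.nabla w v) u)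
        + (M.g (M.nabla v w) u - M.g (M.nabla w v) u) = (2:ℝ) • M.g (M.nabla v w) u := by
      rw [two_smul]; ring
    rw [h2, smul_smul]
    norm_num
  have hSsymm : ∀ v w, v ∈ M.Fp → w ∈ M.Fp → S w v = S v w := by
    intro v w hv hw
    have h0 : S w v - S v w = 0 := by
      apply M.eqF_of_orthF (M.F.sub_mem (hSval w v hw hv) (hSval v w hv hw))
      intro u hu
      rw [M.g_subl, hSdef w v hw hv u hu, hSdef v w hv hw u hu, sub_eq_zero]
      congr 1
      ring
    exact sub_eq_zero.mp h0
  have hAanti : ∀ v w, v ∈ M.Fp → w ∈ M.Fp → A w v = - A v w := by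
    intro v w hv hw
    have h0 : A w v + A v w = 0 := by
      apply M.eqF_of_orthF (M.F.add_mem (hAval w v hw hv) (hAval v w hv hw))
      intro u hu
      rw [M.g_addl, hAdef w v hw hv u hu, hAdef v w hv hw u hu, ← smul_add]
      have h2 : (M.g (M.nabla w v) u - M.g (M.nabla v w) u)
          + (M.g (M.nabla v w) u - M.g (M.nabla w v) u) = 0 := by ring
      rw [h2, smul_zero]
    exact eq_neg_of_add_eq_zero_left h0
  have hAzero : ∀ v, v ∈ M.Fp → A v v = 0 := by
    intro v hv
    apply M.eqF_of_orthF (hAval v v hv hv)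
    intro u hu
    rw [hAdef v v hv hv u hu, sub_self, smul_zero]
  have hppF : ∀ (w u : V), u ∈ M.F → M.g (M.pp w) u = 0 := by
    intro w u hu
    rw [M.g_symm]
    exact M.orth _ _ hu (M.pp_mem w)
  have hgpt : ∀ (w u : V), u ∈ M.F → M.g w u = M.g (M.pt w) u := by
    intro w u hu
    conv_lhs => rw [← M.decomp w]
    rw [M.g_addl, hppF w u hu, add_zero]
  have hptn : ∀ v w, v ∈ M.Fp → w ∈ M.Fp → M.pt (M.nabla v w) = S v w + A v w := by
    intro v w hv hw
    have h0 : M.pt (M.nabla v w) - (S v w + A v w) = 0 := by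
      apply M.eqF_of_orthF
        (M.F.sub_mem (M.pt_mem _) (M.F.add_mem (hSval v w hv hw) (hAval v w hv hw)))
      intro u hu
      rw [M.g_subl, ← hgpt _ u hu, hSA v w hv hw u hu, M.g_addl, sub_self]
    exact sub_eq_zero.mp h0
  have hlie : ∀ v w : V, M.lie v w = M.nabla v w - M.nabla w v :=
    fun v w => (M.torsion_free v w).symm
  have hptlie : ∀ v w, v ∈ M.Fp → w ∈ M.Fp → M.pt (M.lie v w) = A v w + A v w := by
    intro v w hv hw
    rw [hlie, M.pt_sub, hptn v w hv hw, hptn w v hw hv, hSsymm v w hv hw,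
      hAanti v w hv hw]
    abel
  have hKf := M.koszul nf (M.gf f) hTFf hCf (M.gf_symm f) gf_subr (M.gf_subl f)
  have hKg := M.koszul M.nabla M.g M.torsion_free M.compat M.g_symm M.g_subr M.g_subl
  have keyF : ∀ v w, v ∈ M.Fp → w ∈ M.Fp → ∀ u ∈ M.F,
      M.gf f (nf v w) u = M.g (M.nabla v w) u + (f ^ 2 - 1) * M.g (A v w) u := by
    intro v w hv hw u hu
    have e1 : M.gf f w u = M.g w u := by
      rw [M.gf_eq, M.pt_of_Fp hw, M.g_zerol]; ring
    have e2 : M.gf f u v = M.g u v := M.gf_g_right f u hv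
    have e3 : M.gf f v w = M.g v w := M.gf_g_right f v hw
    have e4 : M.gf f (M.lie v w) u
        = M.g (M.lie v w) u + (f ^ 2 - 1) * (M.g (A v w) u + M.g (A v w) u) := by
      rw [M.gf_eq, M.pt_of_mem u hu, hptlie v w hv hw, M.g_addl]
    have e5 : M.gf f (M.lie v u) w = M.g (M.lie v u) w := M.gf_g_right f _ hw
    have e6 : M.gf f (M.lie w u) v = M.g (M.lie w u) v := M.gf_g_right f _ hv
    have hd := hKf v w u
    rw [e1, e2, e3, e4, e5, e6] at hd
    have hg := hKg v w u
    apply FoliatedRiemann.two_cancel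
    linear_combination hd - hg
  have keyFp : ∀ v w, v ∈ M.Fp → w ∈ M.Fp → ∀ z ∈ M.Fp,
      M.gf f (nf v w) z = M.g (M.nabla v w) z := by
    intro v w hv hw z hz
    have e1 : M.gf f w z = M.g w z := M.gf_g_right f w hz
    have e2 : M.gf f z v = M.g z v := M.gf_g_right f z hv
    have e3 : M.gf f v w = M.g v w := M.gf_g_right f v hw
    have e4 : M.gf f (M.lie v w) z = M.g (M.lie v w) z := M.gf_g_right f _ hz
    have e5 : M.gf f (M.lie v z) w = M.g (M.lie v z) w := M.gf_g_right f _ hw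
    have e6 : M.gf f (M.lie w z) v = M.g (M.lie w z) v := M.gf_g_right f _ hv
    have hd := hKf v w z
    rw [e1, e2, e3, e4, e5, e6] at hd
    have hg := hKg v w z
    apply FoliatedRiemann.two_cancel
    linear_combination hd - hg
  have key : ∀ v w, v ∈ M.Fp → w ∈ M.Fp →
      nf v w = M.nabla v w + (finv ^ 2 - 1) • S v w := by
    intro v w hv hw
    have htFp : ∀ z', z' ∈ M.Fp →
        M.gf f (nf v w) z' = M.gf f (M.nabla v w + (finv ^ 2 - 1) • S v w) z' := by
      intro z' hz'
      rw [keyFp v w hv hw z' hz', M.gf_g_right f _ hz', M.g_addl, M.g_smull,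
        M.orth _ _ (hSval v w hv hw) hz']
      ring
    have htF : ∀ u, u ∈ M.F →
        M.gf f (nf v w) u = M.gf f (M.nabla v w + (finv ^ 2 - 1) • S v w) u := by
      intro u hu
      rw [keyF v w hv hw u hu, M.gf_eq, M.pt_of_mem u hu, M.pt_add, M.pt_smul,
        M.pt_of_mem _ (hSval v w hv hw), hptn v w hv hw, M.g_addl, M.g_smull,
        M.g_addl, M.g_addl, M.g_smull]
      linear_combination (-(M.g (S v w) u)) * h1
    have hz : ∀ z, M.gf f (nf v w - (M.nabla v w + (finv ^ 2 - 1) • S v w)) z = 0 := by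
      intro z
      rw [M.gf_subl]
      have hsplit1 : M.gf f (nf v w) z
          = M.gf f (nf v w) (M.pt z) + M.gf f (nf v w) (M.pp z) := by
        conv_lhs => rw [← M.decomp z]
        rw [M.gf_addr]
      have hsplit2 : M.gf f (M.nabla v w + (finv ^ 2 - 1) • S v w) z
          = M.gf f (M.nabla v w + (finv ^ 2 - 1) • S v w) (M.pt z)
            + M.gf f (M.nabla v w + (finv ^ 2 - 1) • S v w) (M.pp z) := by
        conv_lhs => rw [← M.decomp z]
        rw [M.gf_addr]
      rw [hsplit1, hsplit2, htF _ (M.pt_mem z), htFp _ (M.pp_mem z)]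
      ring
    have h0 := M.gf_nondeg f finv hfinv _ hz
    exact sub_eq_zero.mp h0
  have hnfyy := key y y hy hy
  have hnfxx := key x x hx hx
  have hnfxy := key x y hx hy
  have hnfyx := key y x hy hx
  rw [hSsymm x y hx hy] at hnfyx
  have hpnyy := hptn y y hy hy
  rw [hAzero y hy, add_zero] at hpnyy
  have hpnxx := hptn x x hx hx
  rw [hAzero x hx, add_zero] at hpnxx
  have hpnxy := hptn x y hx hy
  have hpnyx := hptn y x hy hx
  rw [hSsymm x y hx hy, hAanti x y hx hy] at hpnyx
  have hptnfyy : M.pt (nf y y) = S y y + (finv ^ 2 - 1) • S y y := by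
    rw [hnfyy, M.pt_add, M.pt_smul, M.pt_of_mem _ (hSval y y hy hy), hpnyy]
  have hptnfxx : M.pt (nf x x) = S x x + (finv ^ 2 - 1) • S x x := by
    rw [hnfxx, M.pt_add, M.pt_smul, M.pt_of_mem _ (hSval x x hx hx), hpnxx]
  have hptnfxy : M.pt (nf x y) = (S x y + A x y) + (finv ^ 2 - 1) • S x y := by
    rw [hnfxy, M.pt_add, M.pt_smul, M.pt_of_mem _ (hSval x y hx hy), hpnxy]
  have hptnfyx : M.pt (nf y x) = (S x y + -A x y) + (finv ^ 2 - 1) • S x y := by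
    rw [hnfyx, M.pt_add, M.pt_smul, M.pt_of_mem _ (hSval x y hx hy), hpnyx]
  have p1 : M.g (M.nabla y y) (S x x) = M.g (S x x) (S y y) := by
    rw [hgpt _ _ (hSval x x hx hx), hpnyy, M.g_symm]
  have p2 : M.g (S y y) (M.nabla x x) = M.g (S x x) (S y y) := by
    rw [M.g_symm, hgpt _ _ (hSval y y hy hy), hpnxx]
  have p3 : M.g (S y y) (S x x) = M.g (S x x) (S y y) := M.g_symm _ _
  have E1 : M.gf f (nf y y) (nf x x)
      = M.g (M.nabla y y) (M.nabla x x) + (finv ^ 2 - 1) * M.g (S x x) (S y y) := by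
    rw [M.gf_eq, hptnfyy, hptnfxx, hnfyy, hnfxx]
    simp only [M.g_addl, M.g_addr, M.g_smull, M.g_smulr]
    rw [p1, p2, p3]
    linear_combination finv ^ 2 * M.g (S x x) (S y y) * h1
  have p4 : M.g (M.nabla x y) (S x y) = M.g (S x y) (S x y) + M.g (A x y) (S x y) := by
    rw [hgpt _ _ (hSval x y hx hy), hpnxy, M.g_addl]
  have p5 : M.g (S x y) (M.nabla y x) = M.g (S x y) (S x y) - M.g (A x y) (S x y) := by
    rw [M.g_symm, hgpt _ _ (hSval x y hx hy), hpnyx]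
    simp only [M.g_addl, M.g_negl]
    ring
  have p6 : M.g (S x y) (A x y) = M.g (A x y) (S x y) := M.g_symm _ _
  have E2 : M.gf f (nf x y) (nf y x)
      = M.g (M.nabla x y) (M.nabla y x) + (finv ^ 2 - 1) * M.g (S x y) (S x y)
        + (1 - f ^ 2) * M.g (A x y) (A x y) := by
    rw [M.gf_eq, hptnfxy, hptnfyx, hnfxy, hnfyx]
    simp only [M.g_addl, M.g_addr, M.g_smull, M.g_smulr, M.g_negl, M.g_negr]
    rw [p4, p5, p6]
    linear_combination finv ^ 2 * M.g (S x y) (S x y) * h1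
  have E3 : M.gf f (nf (M.lie x y) y) x
      = M.g (M.nabla (M.lie x y) y) x
        + (f ^ 2 - 1) * (2 * M.g (A x y) (A x y)) := by
    have e1 : M.gf f y x = M.g y x := M.gf_g_right f y hx
    have e2 : M.gf f x (M.lie x y) = M.g x (M.lie x y) := by
      rw [M.gf_symm, M.gf_g_right f _ hx, M.g_symm]
    have e3 : M.gf f (M.lie x y) y = M.g (M.lie x y) y := M.gf_g_right f _ hy
    have e4 : M.gf f (M.lie (M.lie x y) y) x = M.g (M.lie (M.lie x y) y) x :=
      M.gf_g_right f _ hx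
    have e5 : M.gf f (M.lie (M.lie x y) x) y = M.g (M.lie (M.lie x y) x) y :=
      M.gf_g_right f _ hy
    have e6 : M.gf f (M.lie y x) (M.lie x y)
        = M.g (M.lie y x) (M.lie x y) - (f ^ 2 - 1) * (4 * M.g (A x y) (A x y)) := by
      rw [M.gf_eq, hptlie y x hy hx, hptlie x y hx hy, hAanti x y hx hy]
      simp only [M.g_addl, M.g_addr, M.g_negl, M.g_negr]
      ring
    have hd := hKf (M.lie x y) y x
    rw [e1, e2, e3, e4, e5, e6] at hd
    have hg := hKg (M.lie x y) y x
    apply FoliatedRiemann.two_cancel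
    linear_combination hd - hg
  have e : M.gf f (nf y y) x = M.g (M.nabla y y) x := by
    rw [M.gf_g_right f _ hx, hnfyy, M.g_addl, M.g_smull,
      M.orth _ _ (hSval y y hy hy) hx]
    ring
  have hc := hCf x (nf y y) x
  rw [e] at hc
  have hc2 := M.compat x (M.nabla y y) x
  have hT1 : M.gf f (nf x (nf y y)) x
      = M.g (M.nabla x (M.nabla y y)) x + M.g (M.nabla y y) (M.nabla x x)
        - M.gf f (nf y y) (nf x x) := by
    linear_combination hc2 - hc
  have e' : M.gf f (nf x y) x = M.g (M.nabla x y) x := by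
    rw [M.gf_g_right f _ hx, hnfxy, M.g_addl, M.g_smull,
      M.orth _ _ (hSval x y hx hy) hx]
    ring
  have hc' := hCf y (nf x y) x
  rw [e'] at hc'
  have hc2' := M.compat y (M.nabla x y) x
  have hT2 : M.gf f (nf y (nf x y)) x
      = M.g (M.nabla y (M.nabla x y)) x + M.g (M.nabla x y) (M.nabla y x)
        - M.gf f (nf x y) (nf y x) := by
    linear_combination hc2' - hc'
  have hRf : M.gf f (M.Rc nf x y y) x
      = M.gf f (nf x (nf y y)) x - M.gf f (nf y (nf x y)) x
        - M.gf f (nf (M.lie x y) y) x := by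
    rw [FoliatedRiemann.Rc, M.gf_subl, M.gf_subl]
  have hRg : M.g (M.Rc M.nabla x y y) x
      = M.g (M.nabla x (M.nabla y y)) x - M.g (M.nabla y (M.nabla x y)) x
        - M.g (M.nabla (M.lie x y) y) x := by
    rw [FoliatedRiemann.Rc, M.g_subl, M.g_subl]
  rw [hRf, hT1, hT2, E3, hRg, E1, E2]
  linear_combination (M.g (S x y) (S x y) - M.g (S x x) (S y y)) * h1
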